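/- For every positive integer p, the function κ_p(h) = 1 − (2^{−C(p,2)}/Π_{j=0}^{p−1} j!) det_{0≤i,j<p}( (−1)^i H_{i+j}(0) − H_{i+j}(h) e^{−h²} ) is an even function of h, and κ_p(h) → 0 as h → ∞ (equivalently, when κ_p is written as a finite linear combination of functions h^{2k} e^{−m h²}, only terms with m ≥ 1 occur). -/

import Mathlib

open scoped BigOperators
open Filter

/-- The `k`-th physicists' Hermite polynomial, via
`H_k(z)/k! = Σ_m ((-1)^(k-m)/(k-m)!) (2z)^(2m-k)/(2m-k)!` (terms with negative
factorial arguments being zero). -/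
noncomputable def hermiteH (k : ℕ) (z : ℝ) : ℝ :=
  (k.factorial : ℝ) * ∑ m ∈ Finset.range (k+1),
    if k ≤ 2*m then ((-1:ℝ)^(k-m) / (k-m).factorial) * ((2*z)^(2*m-k) / (2*m-k).factorial)
    else 0

/-- `κ_p(h) = 1 − (2^{-C(p,2)}/Π_{j<p} j!) det_{0≤i,j<p}( (-1)^i H_{i+j}(0) − H_{i+j}(h)e^{-h²} )`. -/
noncomputable def kappa (p : ℕ) (h : ℝ) : ℝ :=
  1 - (((2:ℝ)^(p.choose 2))⁻¹ / ∏ j ∈ Finset.range p, (j.factorial : ℝ)) *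
    Matrix.det (Matrix.of fun i j : Fin p =>
      (-1:ℝ)^(i : ℕ) * hermiteH ((i : ℕ)+(j : ℕ)) 0
        - hermiteH ((i : ℕ)+(j : ℕ)) h * Real.exp (-h^2))

/-- `τ_p(h)`: as `κ_p`, but with the last row of the determinant replaced as in the paper,
and an extra factor `p − 1`. -/
noncomputable def tau (p : ℕ) (h : ℝ) : ℝ :=
  ((p : ℝ) - 1) * (((2:ℝ)^(p.choose 2))⁻¹ / ∏ j ∈ Finset.range p, (j.factorial : ℝ)) *
    Matrix.det (Matrix.of fun i j : Fin p =>
      if (i : ℕ) < p - 1 then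
        (-1:ℝ)^(i : ℕ) * hermiteH ((i : ℕ)+(j : ℕ)) 0
          - hermiteH ((i : ℕ)+(j : ℕ)) h * Real.exp (-h^2)
      else
        (-1:ℝ)^p * hermiteH (p+(j : ℕ)) 0 - hermiteH (p+(j : ℕ)) h * Real.exp (-h^2))

section AuxStmt13
open Finset

noncomputable def cc (i k : ℕ) : ℝ :=
  if k ≤ i ∧ (i - k) % 2 = 0 then
    (i.factorial : ℝ) / (2^i * k.factorial * ((i-k)/2).factorial) else 0

lemma factorial_ne_zero' (n : ℕ) : (n.factorial : ℝ) ≠ 0 :=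
  Nat.cast_ne_zero.mpr n.factorial_ne_zero

lemma cc_zero_of_lt {i k : ℕ} (h : i < k) : cc i k = 0 := by
  simp [cc, Nat.not_le.mpr h]

lemma cc_self (i : ℕ) : cc i i = (2^i : ℝ)⁻¹ := by
  simp [cc]
  rw [mul_comm, div_mul_cancel_left₀ (factorial_ne_zero' i)]

lemma cc_zero_zero : cc 0 0 = 1 := by simp [cc]

lemma cc_succ_zero (i : ℕ) : cc (i+1) 0 = cc i 1 := by
  rcases Nat.even_or_odd i with ⟨a, ha⟩ | ⟨a, ha⟩
  · rw [cc, cc, if_neg (by omega), if_neg (by omega)]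
  · rw [cc, cc, if_pos (by omega), if_pos (by omega)]
    have h3 : (i+1-0)/2 = a+1 := by omega
    have h4 : (i-1)/2 = a := by omega
    rw [h3, h4]
    have e1 : ((i+1).factorial : ℝ) = (↑i+1) * i.factorial := by
      exact_mod_cast Nat.factorial_succ i
    have e2 : ((a+1).factorial : ℝ) = (↑a+1) * a.factorial := by
      exact_mod_cast Nat.factorial_succ a
    have hi : (i:ℝ) + 1 = 2*(↑a+1) := by
      have : (i:ℝ) = 2*a+1 := by exact_mod_cast congrArg (Nat.cast : ℕ → ℝ) ha
      rw [this]; ring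
    rw [e1, e2, pow_succ, hi]
    have n1 := factorial_ne_zero' i
    have n2 := factorial_ne_zero' a
    have n3 : ((2:ℝ))^i ≠ 0 := by positivity
    field_simp
    ring

lemma cc_succ_succ (i k : ℕ) :
    cc (i+1) (k+1) = (1/2) * cc i k + ((k:ℝ)+2) * cc i (k+2) := by
  by_cases hk : k ≤ i ∧ (i - k) % 2 = 0
  · obtain ⟨hk1, hk2⟩ := hk
    by_cases h2 : k + 2 ≤ i
    · -- main case : i = k + 2b + 2
      obtain ⟨b, hb⟩ : ∃ b, i = k + 2*b + 2 := ⟨(i-k)/2 - 1, by omega⟩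
      rw [cc, cc, cc, if_pos (by omega), if_pos (by omega), if_pos (by omega)]
      have h3 : (i+1-(k+1))/2 = b+1 := by omega
      have h4 : (i-k)/2 = b+1 := by omega
      have h5 : (i-(k+2))/2 = b := by omega
      rw [h3, h4, h5]
      have e1 : ((i+1).factorial : ℝ) = (↑i+1) * i.factorial := by
        exact_mod_cast Nat.factorial_succ i
      have e2 : ((k+1).factorial : ℝ) = (↑k+1) * k.factorial := by
        exact_mod_cast Nat.factorial_succ k
      have e3 : ((k+2).factorial : ℝ) = (↑k+2) * ((↑k+1) * k.factorial) := by
        have : ((k+2).factorial : ℝ) = (↑k+2) * (k+1).factorial := by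
          exact_mod_cast Nat.factorial_succ (k+1)
        rw [this, e2]
      have e4 : ((b+1).factorial : ℝ) = (↑b+1) * b.factorial := by
        exact_mod_cast Nat.factorial_succ b
      have hi : (i:ℝ) = 2*b + k + 2 := by rw [hb]; push_cast; ring
      rw [e1, e2, e3, e4, pow_succ, hi]
      have n1 := factorial_ne_zero' i
      have n2 := factorial_ne_zero' k
      have n3 := factorial_ne_zero' b
      have n4 : ((2:ℝ))^i ≠ 0 := by positivity
      have n5 : (k:ℝ) + 1 ≠ 0 := by positivity
      have n6 : (b:ℝ) + 1 ≠ 0 := by positivity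
      field_simp
      ring
    · -- k ≤ i, i - k even, i < k + 2 ⇒ i = k
      have hik : i = k := by omega
      subst hik
      rw [cc, cc, cc, if_pos (by omega), if_pos (by omega), if_neg (by omega)]
      have h3 : (i+1-(i+1))/2 = 0 := by omega
      have h4 : (i-i)/2 = 0 := by omega
      rw [h3, h4]
      have e1 : ((i+1).factorial : ℝ) = (↑i+1) * i.factorial := by
        exact_mod_cast Nat.factorial_succ i
      rw [e1, pow_succ]
      have n1 := factorial_ne_zero' i
      have n2 : ((2:ℝ))^i ≠ 0 := by positivity
      have n5 : (i:ℝ) + 1 ≠ 0 := by positivity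
      have e2 : ((i+1).factorial : ℝ) = (↑i+1) * i.factorial := e1
      rw [Nat.factorial]
      push_cast [e1]
      field_simp
      ring
  · -- degenerate: all terms vanish
    rw [cc, cc, cc, if_neg (by omega), if_neg (by omega), if_neg (by omega)]
    simp

noncomputable def Ssum (N i j : ℕ) : ℝ :=
  ∑ k ∈ Finset.range N, (2^k * k.factorial : ℝ) * cc i k * cc j k

lemma Ssum_ext {N M i j : ℕ} (hN : i < N) (hM : i < M) : Ssum N i j = Ssum M i j := by
  wlog h : N ≤ M generalizing N M
  · exact (this hM hN (by omega)).symm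
  · unfold Ssum
    refine Finset.sum_subset (Finset.range_subset_range.mpr h) ?_
    intro k _ hk
    rw [cc_zero_of_lt (show i < k by simp at hk; omega)]
    ring

lemma Ssum_comm (N i j : ℕ) : Ssum N i j = Ssum N j i :=
  Finset.sum_congr rfl fun k _ => by ring

lemma Ssum_key (a b : ℕ) : Ssum (a+b+2) (a+1) b =
    (∑ k ∈ Finset.range (a+b+1), (2^k * ((k+1).factorial : ℝ)) * cc a k * cc b (k+1))
    + (∑ k ∈ Finset.range (a+b+1), (2^k * ((k+1).factorial : ℝ)) * cc b k * cc a (k+1)) := by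
  rw [Ssum, show a+b+2 = (a+b+1)+1 by omega, Finset.sum_range_succ']
  have step : ∀ k, (2^(k+1) * ((k+1).factorial : ℝ)) * cc (a+1) (k+1) * cc b (k+1)
      = (2^k * ((k+1).factorial : ℝ)) * cc a k * cc b (k+1)
        + (2^(k+1) * (((k+1)+1).factorial : ℝ)) * cc b (k+1) * cc a ((k+1)+1) := by
    intro k
    rw [cc_succ_succ a k]
    have e3 : ((k+1+1).factorial : ℝ) = (↑k+2) * (k+1).factorial := by
      exact_mod_cast Nat.factorial_succ (k+1)
    rw [e3, pow_succ, show k+1+1 = k+2 by omega]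
    ring
  rw [Finset.sum_congr rfl fun k _ => step k, Finset.sum_add_distrib]
  have h3 := Finset.sum_range_succ'
    (fun k => (2^k * ((k+1).factorial:ℝ)) * cc b k * cc a (k+1)) (a+b+1)
  have h4 := Finset.sum_range_succ
    (fun k => (2^k * ((k+1).factorial:ℝ)) * cc b k * cc a (k+1)) (a+b+1)
  have hz : (2^(a+b+1) * ((a+b+1+1).factorial:ℝ)) * cc b (a+b+1) * cc a (a+b+1+1) = 0 := by
    rw [cc_zero_of_lt (show b < a+b+1 by omega)]; ring
  have hf0 : (2^(0:ℕ) * ((0:ℕ).factorial : ℝ)) * cc (a+1) 0 * cc b 0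
      = (2^(0:ℕ) * ((0+1).factorial:ℝ)) * cc b 0 * cc a (0+1) := by
    rw [cc_succ_zero a]
    norm_num [Nat.factorial]
    ring
  try simp only at h3 h4 hz hf0 ⊢
  linarith
lemma Ssum_swap (i j : ℕ) : Ssum (i+j+2) (i+1) j = Ssum (i+j+2) i (j+1) := by
  have h1 := Ssum_key i j
  have h2 := Ssum_key j i
  rw [h1, Ssum_comm (i+j+2) i (j+1), show i+j+2 = j+i+2 by omega, h2,
    show j+i+1 = i+j+1 by omega]
  ring

lemma Ssum_eq (i j : ℕ) : Ssum (i+j+2) i j = cc (i+j) 0 := by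
  induction i generalizing j with
  | zero =>
    rw [Ssum]
    rw [Finset.sum_eq_single 0]
    · simp [cc_zero_zero, Nat.factorial]
    · intro k _ hk
      rw [cc_zero_of_lt (show 0 < k by omega)]; ring
    · intro h; simp at h
  | succ n ih =>
    have e1 : Ssum (n+1+j+2) (n+1) j = Ssum (n+j+2) (n+1) j :=
      Ssum_ext (by omega) (by omega)
    rw [e1, Ssum_swap n j]
    have e2 : Ssum (n+j+2) n (j+1) = Ssum (n+(j+1)+2) n (j+1) :=
      Ssum_ext (by omega) (by omega)
    rw [e2, ih (j+1), show n+(j+1) = n+1+j by omega]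

lemma neg_one_pow_congr_mod {m n : ℕ} (h : m % 2 = n % 2) : ((-1:ℝ))^m = (-1)^n := by
  rcases Nat.even_or_odd m with hm | hm
  · rw [hm.neg_one_pow, (show Even n by rw [Nat.even_iff] at *; omega).neg_one_pow]
  · rw [hm.neg_one_pow, (show Odd n by rw [Nat.odd_iff] at *; omega).neg_one_pow]

lemma hermiteH_zero (n : ℕ) :
    hermiteH n 0 = if n % 2 = 0 then ((-1:ℝ))^(n/2) * n.factorial / (n/2).factorial else 0 := by
  rw [hermiteH]
  by_cases hn : n % 2 = 0
  · rw [if_pos hn, Finset.sum_eq_single (n/2)]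
    · have h1 : n ≤ 2 * (n/2) := by omega
      have h2 : 2 * (n/2) - n = 0 := by omega
      have h3 : n - n/2 = n/2 := by omega
      rw [if_pos h1, h2, h3]
      simp [Nat.factorial]
      ring
    · intro m _ hm
      by_cases h : n ≤ 2*m
      · rw [if_pos h]
        have : 2*m - n ≠ 0 := by omega
        rw [mul_zero, zero_pow this]
        ring
      · rw [if_neg h]
    · intro h
      exfalso; apply h; simp; omega
  · rw [if_neg hn]
    rw [Finset.sum_eq_zero, mul_zero]
    intro m _
    by_cases h : n ≤ 2*m
    · rw [if_pos h]
      have : 2*m - n ≠ 0 := by omega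
      rw [mul_zero, zero_pow this]
      ring
    · rw [if_neg h]

lemma entry_eq (i j : ℕ) : ((-1:ℝ))^i * hermiteH (i+j) 0
    = ((-1:ℝ))^(i/2) * ((-1:ℝ))^(j/2) * 2^(i+j) * cc (i+j) 0 := by
  by_cases hp : (i+j) % 2 = 0
  · rw [hermiteH_zero, if_pos hp, cc, if_pos (by constructor <;> omega)]
    rw [Nat.sub_zero]
    have hs : ((-1:ℝ))^(i/2) * (-1)^(j/2) = (-1)^i * (-1)^((i+j)/2) := by
      rw [← pow_add, ← pow_add]
      refine neg_one_pow_congr_mod ?_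
      rcases Nat.even_or_odd i with ⟨a, ha⟩ | ⟨a, ha⟩ <;>
      rcases Nat.even_or_odd j with ⟨b, hb⟩ | ⟨b, hb⟩ <;> omega
    rw [hs]
    have n1 := factorial_ne_zero' (i+j)
    have n2 := factorial_ne_zero' ((i+j)/2)
    have n3 : ((2:ℝ))^(i+j) ≠ 0 := by positivity
    rw [Nat.factorial_zero]
    field_simp
    ring
  · rw [hermiteH_zero, if_neg hp, cc, if_neg (by omega)]
    ring

lemma det_A (p : ℕ) :
    Matrix.det (Matrix.of fun i j : Fin p => ((-1:ℝ))^(i:ℕ) * hermiteH ((i:ℕ)+(j:ℕ)) 0)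
      = 2^(p.choose 2) * ∏ j ∈ Finset.range p, (j.factorial : ℝ) := by
  set L : Matrix (Fin p) (Fin p) ℝ :=
    Matrix.of (fun i k : Fin p => ((-1:ℝ))^((i:ℕ)/2) * 2^(i:ℕ) * cc i k) with hL
  set D : Matrix (Fin p) (Fin p) ℝ :=
    Matrix.diagonal (fun k : Fin p => (2^(k:ℕ) * ((k:ℕ).factorial) : ℝ)) with hD
  have hA : (Matrix.of fun i j : Fin p => ((-1:ℝ))^(i:ℕ) * hermiteH ((i:ℕ)+(j:ℕ)) 0)
      = L * D * L.transpose := by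
    ext i j
    have h1 : (L * D * L.transpose) i j = ∑ k : Fin p,
        (((-1:ℝ))^((i:ℕ)/2) * 2^(i:ℕ) * cc i k) * ((2:ℝ)^(k:ℕ) * ((k:ℕ).factorial))
          * (((-1:ℝ))^((j:ℕ)/2) * 2^(j:ℕ) * cc j k) := by
      rw [Matrix.mul_apply]
      refine Finset.sum_congr rfl fun k _ => ?_
      rw [Matrix.mul_diagonal, Matrix.transpose_apply]
      simp [hL, hD]
    have h2 : (∑ k : Fin p,
        (((-1:ℝ))^((i:ℕ)/2) * 2^(i:ℕ) * cc i k) * ((2:ℝ)^(k:ℕ) * ((k:ℕ).factorial))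
          * (((-1:ℝ))^((j:ℕ)/2) * 2^(j:ℕ) * cc j k))
        = ((-1:ℝ))^((i:ℕ)/2) * ((-1:ℝ))^((j:ℕ)/2) * 2^((i:ℕ)+(j:ℕ)) * Ssum p i j := by
      rw [Ssum, Finset.mul_sum, ← Fin.sum_univ_eq_sum_range]
      refine Finset.sum_congr rfl fun k _ => ?_
      rw [pow_add]
      ring
    rw [Matrix.of_apply, h1, h2,
      Ssum_ext (i.isLt) (show (i:ℕ) < (i:ℕ)+(j:ℕ)+2 by omega), Ssum_eq, entry_eq]
  rw [hA, Matrix.det_mul, Matrix.det_mul, Matrix.det_transpose]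
  have hLtri : L.BlockTriangular OrderDual.toDual := by
    intro i j hij
    simp only [hL, Matrix.of_apply]
    rw [cc_zero_of_lt (show (i:ℕ) < (j:ℕ) from hij)]
    ring
  have hdetL : L.det = ∏ i : Fin p, ((-1:ℝ))^((i:ℕ)/2) := by
    rw [Matrix.det_of_lowerTriangular L hLtri]
    refine Finset.prod_congr rfl fun i _ => ?_
    simp only [hL, Matrix.of_apply]
    rw [cc_self]
    rw [mul_inv_cancel_right₀ (by positivity)]
  have hdetD : D.det = 2^(p.choose 2) * ∏ j ∈ Finset.range p, (j.factorial : ℝ) := by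
    rw [hD, Matrix.det_diagonal, ← Fin.prod_univ_eq_prod_range (fun j => (j.factorial : ℝ)) p]
    rw [Finset.prod_mul_distrib]
    congr 1
    rw [Finset.prod_pow_eq_pow_sum]
    congr 1
    rw [Fin.sum_univ_eq_sum_range (fun k => k) p, Finset.sum_range_id, Nat.choose_two_right]
  rw [hdetL, hdetD]
  rw [show ∀ x y : ℝ, x * y * x = (x * x) * y by intros; ring]
  rw [← Finset.prod_mul_distrib]
  have : ∀ i : Fin p, ((-1:ℝ))^((i:ℕ)/2) * ((-1:ℝ))^((i:ℕ)/2) = 1 := by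
    intro i
    rw [← pow_add]
    exact Even.neg_one_pow ⟨(i:ℕ)/2, by omega⟩
  rw [Finset.prod_congr rfl fun i _ => this i, Finset.prod_const_one, one_mul]

lemma hermiteH_neg (k : ℕ) (h : ℝ) : hermiteH k (-h) = (-1:ℝ)^k * hermiteH k h := by
  rw [hermiteH, hermiteH, Finset.mul_sum, Finset.mul_sum, Finset.mul_sum]
  refine Finset.sum_congr rfl fun m _ => ?_
  by_cases hm : k ≤ 2*m
  · rw [if_pos hm, if_pos hm]
    have e1 : (2*(-h)) = -(2*h) := by ring
    rw [e1, neg_pow (2*h) (2*m-k)]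
    rw [neg_one_pow_congr_mod (show (2*m-k) % 2 = k % 2 by omega)]
    ring
  · rw [if_neg hm, if_neg hm]
    ring

lemma hermiteH_mul_sign (i j : ℕ) :
    ((-1:ℝ))^i * hermiteH (i+j) 0 = (-1:ℝ)^j * hermiteH (i+j) 0 := by
  by_cases hp : (i+j) % 2 = 0
  · rw [neg_one_pow_congr_mod (show i%2 = j%2 by omega)]
  · rw [hermiteH_zero, if_neg hp]; ring

lemma kappa_even (p : ℕ) (h : ℝ) : kappa p (-h) = kappa p h := by
  suffices hdd : (Matrix.of fun i j : Fin p =>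
      (-1:ℝ)^(i : ℕ) * hermiteH ((i : ℕ)+(j : ℕ)) 0
        - hermiteH ((i : ℕ)+(j : ℕ)) (-h) * Real.exp (-(-h)^2)).det
      = (Matrix.of fun i j : Fin p =>
      (-1:ℝ)^(i : ℕ) * hermiteH ((i : ℕ)+(j : ℕ)) 0
        - hermiteH ((i : ℕ)+(j : ℕ)) h * Real.exp (-h^2)).det by
    rw [kappa, kappa, hdd]
  set DS := Matrix.diagonal (fun i : Fin p => ((-1:ℝ))^(i:ℕ)) with hDS
  have hMM : (Matrix.of fun i j : Fin p =>
      (-1:ℝ)^(i : ℕ) * hermiteH ((i : ℕ)+(j : ℕ)) 0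
        - hermiteH ((i : ℕ)+(j : ℕ)) (-h) * Real.exp (-(-h)^2))
      = DS * (Matrix.of fun i j : Fin p =>
      (-1:ℝ)^(i : ℕ) * hermiteH ((i : ℕ)+(j : ℕ)) 0
        - hermiteH ((i : ℕ)+(j : ℕ)) h * Real.exp (-h^2)) * DS := by
    ext i j
    rw [Matrix.mul_diagonal, Matrix.diagonal_mul, Matrix.of_apply, Matrix.of_apply, neg_sq,
      hermiteH_neg, pow_add]
    have h2i : ((-1:ℝ))^(i:ℕ) * ((-1:ℝ))^(i:ℕ) = 1 := by
      rw [← pow_add]; exact Even.neg_one_pow ⟨(i:ℕ), rfl⟩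
    linear_combination hermiteH_mul_sign (i:ℕ) (j:ℕ)
      - ((-1:ℝ)^((j:ℕ)) * hermiteH ((i:ℕ)+(j:ℕ)) 0) * h2i
  rw [hMM, Matrix.det_mul, Matrix.det_mul, hDS, Matrix.det_diagonal]
  set d := (Matrix.of fun i j : Fin p =>
      (-1:ℝ)^(i : ℕ) * hermiteH ((i : ℕ)+(j : ℕ)) 0
        - hermiteH ((i : ℕ)+(j : ℕ)) h * Real.exp (-h^2)).det
  rw [show (∏ i : Fin p, ((-1:ℝ))^(i:ℕ)) * d * (∏ i : Fin p, ((-1:ℝ))^(i:ℕ))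
    = ((∏ i : Fin p, ((-1:ℝ))^(i:ℕ)) * (∏ i : Fin p, ((-1:ℝ))^(i:ℕ))) * d by ring,
    ← Finset.prod_mul_distrib]
  have he : ∀ i : Fin p, ((-1:ℝ))^((i:ℕ)) * ((-1:ℝ))^((i:ℕ)) = 1 := by
    intro i; rw [← pow_add]; exact Even.neg_one_pow ⟨(i:ℕ), rfl⟩
  rw [Finset.prod_congr rfl fun i _ => he i, Finset.prod_const_one, one_mul]

lemma tendsto_aux (t : ℕ) :
    Tendsto (fun h : ℝ => h^t * Real.exp (-h^2)) atTop (nhds 0) := by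
  have h1 : Tendsto (fun x : ℝ => x^t * Real.exp (-x)) atTop (nhds 0) :=
    Real.tendsto_pow_mul_exp_neg_atTop_nhds_zero t
  have h2 : Tendsto (fun h : ℝ => h^2) atTop atTop := tendsto_pow_atTop (two_ne_zero)
  have h3 := h1.comp h2
  refine squeeze_zero' ?_ ?_ h3
  · filter_upwards [eventually_ge_atTop 0] with h hh
    positivity
  · filter_upwards [eventually_ge_atTop 1] with h hh
    have hpow : h^t ≤ (h^2)^t := by
      rw [← pow_mul]
      exact pow_le_pow_right₀ hh (by omega)
    have hexp : (0:ℝ) < Real.exp (-h^2) := Real.exp_pos _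
    calc h^t * Real.exp (-h^2) ≤ (h^2)^t * Real.exp (-h^2) :=
          mul_le_mul_of_nonneg_right hpow hexp.le
      _ = ((fun x : ℝ => x^t * Real.exp (-x)) ∘ (fun h : ℝ => h^2)) h := by simp

lemma tendsto_hermite_exp (n : ℕ) :
    Tendsto (fun h : ℝ => hermiteH n h * Real.exp (-h^2)) atTop (nhds 0) := by
  have key : ∀ h : ℝ, hermiteH n h * Real.exp (-h^2) = ∑ m ∈ Finset.range (n+1),
      (if n ≤ 2*m then ((-1:ℝ)^(n-m) / (n-m).factorial)
          * ((n.factorial : ℝ) * 2^(2*m-n) / (2*m-n).factorial)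
          * (h^(2*m-n) * Real.exp (-h^2)) else 0) := by
    intro h
    rw [hermiteH, Finset.mul_sum, Finset.sum_mul]
    refine Finset.sum_congr rfl fun m _ => ?_
    by_cases hm : n ≤ 2*m
    · rw [if_pos hm, if_pos hm, mul_pow]
      ring
    · rw [if_neg hm, if_neg hm]; ring
  rw [show (fun h : ℝ => hermiteH n h * Real.exp (-h^2)) = _ from funext key]
  have H := tendsto_finset_sum (Finset.range (n+1))
    (f := fun (m : ℕ) (h : ℝ) => if n ≤ 2*m then ((-1:ℝ)^(n-m) / (n-m).factorial)
          * ((n.factorial : ℝ) * 2^(2*m-n) / (2*m-n).factorial)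
          * (h^(2*m-n) * Real.exp (-h^2)) else 0)
    (x := atTop) (a := fun _ => (0:ℝ)) ?_
  · simpa using H
  · intro m _
    by_cases hm : n ≤ 2*m
    · simp only [if_pos hm]
      simpa using ((tendsto_aux (2*m-n)).const_mul
        (((-1:ℝ)^(n-m) / (n-m).factorial) * ((n.factorial : ℝ) * 2^(2*m-n) / (2*m-n).factorial)))
    · simp only [if_neg hm]
      exact tendsto_const_nhds

end AuxStmt13

/-- `κ_p` is an even function of `h`, and `κ_p(h) → 0` as `h → ∞`. -/
theorem stmt13 (p : ℕ) (hp : 0 < p) :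
    (∀ h : ℝ, kappa p (-h) = kappa p h) ∧
      Filter.Tendsto (kappa p) atTop (nhds 0) := by
  constructor
  · exact kappa_even p
  · set c : ℝ := ((2:ℝ)^(p.choose 2))⁻¹ / ∏ j ∈ Finset.range p, (j.factorial : ℝ) with hc
    set A : Matrix (Fin p) (Fin p) ℝ :=
      Matrix.of (fun i j : Fin p => ((-1:ℝ))^(i:ℕ) * hermiteH ((i:ℕ)+(j:ℕ)) 0) with hA
    have hM : Tendsto (fun h : ℝ => (Matrix.of fun i j : Fin p =>
        (-1:ℝ)^(i : ℕ) * hermiteH ((i : ℕ)+(j : ℕ)) 0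
          - hermiteH ((i : ℕ)+(j : ℕ)) h * Real.exp (-h^2))) atTop (nhds A) := by
      refine tendsto_pi_nhds.mpr ?_
      intro i
      refine tendsto_pi_nhds.mpr ?_
      intro j
      have := tendsto_const_nhds (x := ((-1:ℝ))^((i:ℕ)) * hermiteH ((i:ℕ)+(j:ℕ)) 0)
        (f := atTop (α := ℝ)) |>.sub (tendsto_hermite_exp ((i:ℕ)+(j:ℕ)))
      simpa [hA] using this
    have hcont : Continuous fun M : Matrix (Fin p) (Fin p) ℝ => M.det :=
      continuous_id.matrix_det
    have hdet := (hcont.tendsto A).comp hM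
    have hfin : Tendsto (kappa p) atTop (nhds (1 - c * A.det)) := by
      have : Tendsto (fun h : ℝ => 1 - c * (Matrix.of fun i j : Fin p =>
          (-1:ℝ)^(i : ℕ) * hermiteH ((i : ℕ)+(j : ℕ)) 0
            - hermiteH ((i : ℕ)+(j : ℕ)) h * Real.exp (-h^2)).det) atTop
          (nhds (1 - c * A.det)) :=
        tendsto_const_nhds.sub (hdet.const_mul c)
      exact this
    have hval : 1 - c * A.det = 0 := by
      rw [hA, det_A, hc]
      have h1 : (∏ j ∈ Finset.range p, (j.factorial : ℝ)) ≠ 0 :=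
        Finset.prod_ne_zero_iff.mpr fun j _ => factorial_ne_zero' j
      have h2 : ((2:ℝ))^(p.choose 2) ≠ 0 := by positivity
      field_simp
      try ring
    rw [hval] at hfin
    exact hfin
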